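/- arXiv:1403.7863 — 2 statements merged into one kernel-verified Lean document; each statement's English description precedes it below -/
import Mathlib

section
/- For complex α, β, γ with γ + n not a nonpositive integer, set δ_n = δ₀ - n where 1 + α + β = γ + δ₀, and u_n(z) = ₂F₁(α, β; γ + n; z). Then for all z in the open unit disk, (z - 1) u_n'(z) = -δ_{n+1} u_n(z) + (δ_{n+1} - αβ/(γ+n)) u_{n+1}(z). -/
open Filter Topology

/-- The Gauss hypergeometric series `₂F₁(a, b; c; z)`. -/
noncomputable def gaussHyp (a b c z : ℂ) : ℂ :=
  ∑' n : ℕ, ((ascPochhammer ℂ n).eval a * (ascPochhammer ℂ n).eval b /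
    ((ascPochhammer ℂ n).eval c * (n.factorial : ℂ))) * z ^ n

noncomputable def ghCoef (a b c : ℂ) (k : ℕ) : ℂ :=
  (ascPochhammer ℂ k).eval a * (ascPochhammer ℂ k).eval b /
    ((ascPochhammer ℂ k).eval c * (k.factorial : ℂ))

lemma gaussHyp_eq_tsum (a b c z : ℂ) : gaussHyp a b c z = ∑' k : ℕ, ghCoef a b c k * z ^ k := rfl

lemma asc_ne_zero {c : ℂ} (hc : ∀ m : ℕ, c + (m : ℂ) ≠ 0) (k : ℕ) :
    (ascPochhammer ℂ k).eval c ≠ 0 := by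
  induction k with
  | zero => simp
  | succ k ih =>
    rw [ascPochhammer_succ_eval]
    exact mul_ne_zero ih (hc k)

lemma ghCoef_succ (a b c : ℂ) (hc : ∀ m : ℕ, c + (m : ℂ) ≠ 0) (k : ℕ) :
    ghCoef a b c (k + 1) = ghCoef a b c k * ((a + k) * (b + k) / ((c + k) * (k + 1))) := by
  have hC := asc_ne_zero hc k
  have hck := hc k
  have hF : (k.factorial : ℂ) ≠ 0 := Nat.cast_ne_zero.2 k.factorial_ne_zero
  have hk1 : ((k : ℂ) + 1) ≠ 0 := by
    have : (((k + 1 : ℕ)) : ℂ) ≠ 0 := Nat.cast_ne_zero.2 (Nat.succ_ne_zero k)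
    push_cast at this; exact this
  rw [ghCoef, ghCoef, ascPochhammer_succ_eval, ascPochhammer_succ_eval, ascPochhammer_succ_eval,
    Nat.factorial_succ]
  push_cast
  field_simp

lemma tendsto_ratio (a b : ℂ) :
    Tendsto (fun k : ℕ => (a + k) / (b + k)) atTop (𝓝 1) := by
  have hb : ∀ᶠ k : ℕ in atTop, (k : ℝ) - ‖b‖ > 0 := by
    have := tendsto_natCast_atTop_atTop (R := ℝ)
    filter_upwards [this.eventually_gt_atTop ‖b‖] with k hk
    linarith
  have hbne : ∀ᶠ k : ℕ in atTop, b + (k : ℂ) ≠ 0 := by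
    filter_upwards [hb] with k hk h0
    have h2 := norm_sub_le (b + (k:ℂ)) b
    rw [add_sub_cancel_left, h0, norm_zero, Complex.norm_natCast] at h2
    simp only [zero_add] at h2
    linarith
  have h0 : Tendsto (fun k : ℕ => (a - b) / (b + k)) atTop (𝓝 0) := by
    apply squeeze_zero_norm' (a := fun k : ℕ => ‖a - b‖ / ((k : ℝ) - ‖b‖))
    · filter_upwards [hb] with k hk
      rw [norm_div]
      apply div_le_div_of_nonneg_left (norm_nonneg _) hk
      have h2 := norm_sub_le (b + (k:ℂ)) b
      rw [add_sub_cancel_left, Complex.norm_natCast] at h2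
      linarith
    · apply Tendsto.div_atTop tendsto_const_nhds
      have : Tendsto (fun k : ℕ => (k : ℝ)) atTop atTop := tendsto_natCast_atTop_atTop
      exact tendsto_atTop_add_const_right _ (-‖b‖) this |>.congr (fun k => by ring)
  have : Tendsto (fun k : ℕ => 1 + (a - b) / (b + k)) atTop (𝓝 1) := by
    simpa using tendsto_const_nhds.add h0
  apply this.congr'
  filter_upwards [hbne] with k hk
  field_simp
  ring

lemma ghCoef_summable_aux (a b c : ℂ) (hc : ∀ m : ℕ, c + (m : ℂ) ≠ 0) {r : ℝ}
    (hr0 : 0 ≤ r) (hr1 : r < 1) :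
    Summable (fun k : ℕ => ‖ghCoef a b c k‖ * ((k : ℝ) + 1) * r ^ k) := by
  apply summable_of_ratio_norm_eventually_le (r := (1 + r) / 2) (by linarith)
  have W : Tendsto (fun k : ℕ => (a + k) * (b + k) / ((c + k) * ((k : ℂ) + 1)))
      atTop (𝓝 1) := by
    have := (tendsto_ratio a c).mul (tendsto_ratio b 1)
    simp only [one_mul] at this
    apply this.congr
    intro k
    rw [div_mul_div_comm, add_comm (1 : ℂ) (k : ℂ)]
  have W2 : Tendsto (fun k : ℕ => ((k : ℝ) + 2) / ((k : ℝ) + 1)) atTop (𝓝 1) := by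
    have h0 : Tendsto (fun k : ℕ => 1 + 1 / ((k : ℝ) + 1)) atTop (𝓝 1) := by
      simpa using tendsto_const_nhds.add (tendsto_one_div_add_atTop_nhds_zero_nat (𝕜 := ℝ))
    apply h0.congr
    intro k
    have : ((k : ℝ) + 1) ≠ 0 := by positivity
    field_simp
    ring
  have T : Tendsto (fun k : ℕ =>
      ‖(a + k) * (b + k) / ((c + k) * ((k : ℂ) + 1))‖ * (((k : ℝ) + 2) / ((k : ℝ) + 1)) * r)
      atTop (𝓝 (‖(1 : ℂ)‖ * 1 * r)) := ((W.norm.mul W2).mul tendsto_const_nhds)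
  simp only [norm_one, one_mul] at T
  filter_upwards [T.eventually_le_const (by linarith : r < (1 + r) / 2)] with k hk
  have hk1 : ((k : ℝ) + 1) ≠ 0 := by positivity
  have hfk1 : ‖ghCoef a b c (k + 1)‖ * ((↑(k + 1) : ℝ) + 1) * r ^ (k + 1)
      = (‖ghCoef a b c k‖ * ((k : ℝ) + 1) * r ^ k) *
        (‖(a + k) * (b + k) / ((c + k) * ((k : ℂ) + 1))‖ * (((k : ℝ) + 2) / ((k : ℝ) + 1)) * r) := by
    rw [ghCoef_succ a b c hc k, norm_mul]
    set Q := ‖(a + (k:ℂ)) * (b + (k:ℂ)) / ((c + (k:ℂ)) * ((k : ℂ) + 1))‖ with hQ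
    push_cast
    rw [pow_succ]
    field_simp
    ring
  have hnn : (0 : ℝ) ≤ ‖ghCoef a b c k‖ * ((k : ℝ) + 1) * r ^ k := by positivity
  rw [Real.norm_of_nonneg (by positivity), Real.norm_of_nonneg hnn, hfk1, mul_comm]
  exact mul_le_mul_of_nonneg_right hk hnn

lemma ghCoef_summable (a b c : ℂ) (hc : ∀ m : ℕ, c + (m : ℂ) ≠ 0) {z : ℂ} (hz : ‖z‖ < 1) :
    Summable (fun k : ℕ => ghCoef a b c k * z ^ k) := by
  apply Summable.of_norm_bounded (ghCoef_summable_aux a b c hc (norm_nonneg z) hz)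
  intro k
  rw [norm_mul, norm_pow]
  have h1 : (0:ℝ) ≤ (k : ℝ) := Nat.cast_nonneg k
  nlinarith [mul_nonneg (mul_nonneg (norm_nonneg (ghCoef a b c k)) h1)
    (pow_nonneg (norm_nonneg z) k)]

lemma ghCoef_deriv_summable (a b c : ℂ) (hc : ∀ m : ℕ, c + (m : ℂ) ≠ 0) {z : ℂ} {r : ℝ}
    (hzr : ‖z‖ ≤ r) (hr0 : 0 < r) (hr1 : r < 1) :
    Summable (fun k : ℕ => ghCoef a b c k * ((k : ℂ) * z ^ (k - 1))) := by
  apply Summable.of_norm_bounded ((ghCoef_summable_aux a b c hc hr0.le hr1).mul_left r⁻¹)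
  intro k
  cases k with
  | zero => simp; positivity
  | succ k =>
    have hcalc : r⁻¹ * (‖ghCoef a b c (k + 1)‖ * ((↑(k + 1) : ℝ) + 1) * r ^ (k + 1))
        = ‖ghCoef a b c (k + 1)‖ * ((k : ℝ) + 2) * r ^ k := by
      push_cast
      rw [pow_succ]
      field_simp
      ring
    rw [hcalc, norm_mul, norm_mul, norm_pow, Complex.norm_natCast]
    simp only [Nat.add_sub_cancel]
    push_cast
    have hzk : ‖z‖ ^ k ≤ r ^ k := pow_le_pow_left₀ (norm_nonneg z) hzr k
    have h1 : (0:ℝ) ≤ (k : ℝ) := Nat.cast_nonneg k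
    nlinarith [mul_nonneg (mul_nonneg (norm_nonneg (ghCoef a b c (k + 1)))
      (by linarith : (0:ℝ) ≤ (k:ℝ) + 1)) (sub_nonneg.2 hzk),
      mul_nonneg (norm_nonneg (ghCoef a b c (k + 1))) (pow_nonneg hr0.le k)]

lemma gaussHyp_hasDerivAt (a b c : ℂ) (hc : ∀ m : ℕ, c + (m : ℂ) ≠ 0) {z : ℂ} (hz : ‖z‖ < 1) :
    HasDerivAt (fun w => gaussHyp a b c w)
      (∑' k : ℕ, ghCoef a b c k * ((k : ℂ) * z ^ (k - 1))) z := by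
  set r : ℝ := (1 + ‖z‖) / 2 with hrdef
  have h0z : (0:ℝ) ≤ ‖z‖ := norm_nonneg z
  have hr0 : 0 < r := by rw [hrdef]; linarith
  have hrz : ‖z‖ < r := by rw [hrdef]; linarith
  have hr1 : r < 1 := by rw [hrdef]; linarith
  have key := hasDerivAt_tsum_of_isPreconnected
    (u := fun k : ℕ => r⁻¹ * (‖ghCoef a b c k‖ * ((k : ℝ) + 1) * r ^ k))
    (t := Metric.ball (0 : ℂ) r)
    (g := fun k w => ghCoef a b c k * w ^ k)
    (g' := fun k w => ghCoef a b c k * ((k : ℂ) * w ^ (k - 1)))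
    (y₀ := 0) (y := z)
    ((ghCoef_summable_aux a b c hc hr0.le hr1).mul_left r⁻¹)
    Metric.isOpen_ball
    ((convex_ball (0:ℂ) r).isPreconnected)
    (fun k w _ => (hasDerivAt_pow k w).const_mul (ghCoef a b c k))
    ?_ (Metric.mem_ball_self hr0)
    (ghCoef_summable a b c hc (by simpa using zero_lt_one))
    (by simpa using hrz)
  · have : (fun w => ∑' k : ℕ, ghCoef a b c k * w ^ k) = fun w => gaussHyp a b c w := by
      funext w
      rw [gaussHyp_eq_tsum]
    rwa [this] at key
  · intro k w hw
    have hwr : ‖w‖ ≤ r := by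
      rw [Metric.mem_ball, dist_zero_right] at hw
      exact hw.le
    cases k with
    | zero => simp; positivity
    | succ k =>
      have hcalc : r⁻¹ * (‖ghCoef a b c (k + 1)‖ * ((↑(k + 1) : ℝ) + 1) * r ^ (k + 1))
          = ‖ghCoef a b c (k + 1)‖ * ((k : ℝ) + 2) * r ^ k := by
        push_cast
        rw [pow_succ]
        field_simp
        ring
      rw [hcalc, norm_mul, norm_mul, norm_pow, Complex.norm_natCast]
      simp only [Nat.add_sub_cancel]
      push_cast
      have hzk : ‖w‖ ^ k ≤ r ^ k := pow_le_pow_left₀ (norm_nonneg w) hwr k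
      have h1 : (0:ℝ) ≤ (k : ℝ) := Nat.cast_nonneg k
      nlinarith [mul_nonneg (mul_nonneg (norm_nonneg (ghCoef a b c (k + 1)))
        (by linarith : (0:ℝ) ≤ (k:ℝ) + 1)) (sub_nonneg.2 hzk),
        mul_nonneg (norm_nonneg (ghCoef a b c (k + 1))) (pow_nonneg hr0.le k)]

lemma asc_shift (c : ℂ) (j : ℕ) :
    (ascPochhammer ℂ j).eval (c + 1) * c = (ascPochhammer ℂ j).eval c * (c + j) := by
  induction j with
  | zero => simp
  | succ j ih =>
    rw [ascPochhammer_succ_eval, ascPochhammer_succ_eval]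
    push_cast
    linear_combination (c + 1 + (j : ℂ)) * ih

lemma key_alg (a b c : ℂ) (hc : ∀ m : ℕ, c + (m : ℂ) ≠ 0) (k : ℕ) :
    (k : ℂ) * ghCoef a b c k - ((k : ℂ) + 1) * ghCoef a b c (k + 1) =
      -(a + b - c) * ghCoef a b c k + ((a + b - c) - a * b / c) * ghCoef a b (c + 1) k := by
  have hc1 : ∀ m : ℕ, (c + 1) + (m : ℂ) ≠ 0 := by
    intro m
    have h := hc (m + 1)
    push_cast at h ⊢
    intro h0
    exact h (by linear_combination h0)
  have hC := asc_ne_zero hc k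
  have hC1 := asc_ne_zero hc1 k
  have hck := hc k
  have hc0 : c ≠ 0 := by have := hc 0; simpa using this
  have hF : (k.factorial : ℂ) ≠ 0 := Nat.cast_ne_zero.2 k.factorial_ne_zero
  have hk1 : ((k : ℂ) + 1) ≠ 0 := by
    have : (((k + 1 : ℕ)) : ℂ) ≠ 0 := Nat.cast_ne_zero.2 (Nat.succ_ne_zero k)
    push_cast at this; exact this
  have hb' : ghCoef a b (c + 1) k = ghCoef a b c k * (c / (c + k)) := by
    rw [ghCoef, ghCoef, div_mul_div_comm,
      div_eq_div_iff (mul_ne_zero hC1 hF) (mul_ne_zero (mul_ne_zero hC hF) hck)]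
    linear_combination (-(ascPochhammer ℂ k).eval a * (ascPochhammer ℂ k).eval b *
      (k.factorial : ℂ)) * asc_shift c k
  rw [ghCoef_succ a b c hc k, hb']
  set t := ghCoef a b c k
  field_simp
  ring

/-- contiguous relation
`(z - 1) uₙ' = -δ_{n+1} uₙ + (δ_{n+1} - αβ/(γ+n)) u_{n+1}` with
`δ_{n+1} = α + β - γ - n`, for `uₙ(z) = ₂F₁(α, β; γ + n; z)` on the unit disk. -/
theorem gaussHyp_contiguous_zsub1_deriv
    (α β γ δ₀ : ℂ) (hδ₀ : 1 + α + β = γ + δ₀)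
    (n : ℕ) (hγn : ∀ m : ℕ, γ + (n : ℂ) ≠ -(m : ℂ)) :
    ∀ z : ℂ, ‖z‖ < 1 →
      (z - 1) * deriv (fun w => gaussHyp α β (γ + n) w) z =
        -(δ₀ - (n + 1)) * gaussHyp α β (γ + n) z
          + ((δ₀ - (n + 1)) - α * β / (γ + n)) * gaussHyp α β (γ + n + 1) z := by
  intro z hz
  set c : ℂ := γ + n with hcdef
  have hc : ∀ m : ℕ, c + (m : ℂ) ≠ 0 := by
    intro m h
    exact hγn m (by linear_combination h)
  have hc1 : ∀ m : ℕ, (c + 1) + (m : ℂ) ≠ 0 := by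
    intro m
    have h := hc (m + 1)
    push_cast at h ⊢
    intro h0
    exact h (by linear_combination h0)
  have hδ : δ₀ - ((n : ℂ) + 1) = α + β - c := by
    rw [hcdef]; linear_combination -hδ₀
  -- basic sums
  have H1 : HasSum (fun k : ℕ => ghCoef α β c k * z ^ k) (gaussHyp α β c z) := by
    rw [gaussHyp_eq_tsum]; exact (ghCoef_summable α β c hc hz).hasSum
  have H2 : HasSum (fun k : ℕ => ghCoef α β (c + 1) k * z ^ k) (gaussHyp α β (c + 1) z) := by
    rw [gaussHyp_eq_tsum]; exact (ghCoef_summable α β (c + 1) hc1 hz).hasSum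
  -- derivative
  have hD := gaussHyp_hasDerivAt α β c hc hz
  set D := ∑' k : ℕ, ghCoef α β c k * ((k : ℂ) * z ^ (k - 1)) with hDdef
  have hr0 : (0:ℝ) < (1 + ‖z‖) / 2 := by positivity
  have hr1 : (1 + ‖z‖) / 2 < 1 := by linarith
  have hzr : ‖z‖ ≤ (1 + ‖z‖) / 2 := by linarith
  have H3 : HasSum (fun k : ℕ => ghCoef α β c k * ((k : ℂ) * z ^ (k - 1))) D :=
    (ghCoef_deriv_summable α β c hc hzr hr0 hr1).hasSum
  have H4 : HasSum (fun k : ℕ => (k : ℂ) * ghCoef α β c k * z ^ k) (z * D) := by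
    have heq : (fun k : ℕ => z * (ghCoef α β c k * ((k : ℂ) * z ^ (k - 1))))
        = fun k : ℕ => (k : ℂ) * ghCoef α β c k * z ^ k := by
      funext k
      cases k with
      | zero => simp
      | succ k =>
        simp only [Nat.add_sub_cancel]
        push_cast
        rw [pow_succ]
        ring
    exact heq ▸ (H3.mul_left z)
  have H5 : HasSum (fun k : ℕ => ((k : ℂ) + 1) * ghCoef α β c (k + 1) * z ^ k) D := by
    have h5' : HasSum (fun k : ℕ => ghCoef α β c (k + 1) * (((k + 1 : ℕ) : ℂ) * z ^ (k + 1 - 1)))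
        D := by
      apply (hasSum_nat_add_iff
        (f := fun k : ℕ => ghCoef α β c k * ((k : ℂ) * z ^ (k - 1))) 1).mpr
      simpa using H3
    have heq : (fun k : ℕ => ghCoef α β c (k + 1) * (((k + 1 : ℕ) : ℂ) * z ^ (k + 1 - 1)))
        = fun k : ℕ => ((k : ℂ) + 1) * ghCoef α β c (k + 1) * z ^ k := by
      funext k
      simp only [Nat.add_sub_cancel]
      push_cast
      ring
    exact heq ▸ h5'
  -- combine
  have HL : HasSum (fun k : ℕ => ((k : ℂ) * ghCoef α β c k - ((k : ℂ) + 1) * ghCoef α β c (k + 1))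
      * z ^ k) (z * D - D) := by
    have heq : (fun k : ℕ => (k : ℂ) * ghCoef α β c k * z ^ k
        - ((k : ℂ) + 1) * ghCoef α β c (k + 1) * z ^ k)
        = fun k : ℕ => ((k : ℂ) * ghCoef α β c k - ((k : ℂ) + 1) * ghCoef α β c (k + 1)) * z ^ k := by
      funext k; ring
    exact heq ▸ (H4.sub H5)
  have HR : HasSum (fun k : ℕ => -(α + β - c) * (ghCoef α β c k * z ^ k)
      + ((α + β - c) - α * β / c) * (ghCoef α β (c + 1) k * z ^ k))
      (-(α + β - c) * gaussHyp α β c z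
        + ((α + β - c) - α * β / c) * gaussHyp α β (c + 1) z) :=
    (H1.mul_left _).add (H2.mul_left _)
  have HL' : HasSum (fun k : ℕ => -(α + β - c) * (ghCoef α β c k * z ^ k)
      + ((α + β - c) - α * β / c) * (ghCoef α β (c + 1) k * z ^ k)) (z * D - D) := by
    have heq : (fun k : ℕ => ((k : ℂ) * ghCoef α β c k - ((k : ℂ) + 1) * ghCoef α β c (k + 1))
        * z ^ k) = fun k : ℕ => -(α + β - c) * (ghCoef α β c k * z ^ k)
        + ((α + β - c) - α * β / c) * (ghCoef α β (c + 1) k * z ^ k) := by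
      funext k
      linear_combination z ^ k * key_alg α β c hc k
    exact heq ▸ HL
  have hfin := HL'.unique HR
  rw [hD.deriv, hδ]
  linear_combination hfin
end

section
/- Let a, α, β, γ, δ, ε, q be complex with 1 + α + β = γ + δ + ε, ε = -1, γ - 1 not a nonpositive integer, and a ∉ {0, 1}. Suppose q satisfies (q - aαβ + a(1-δ))(q - aαβ + (a-1)(1-γ)) - a(1-a)(1+α-γ)(1+β-γ) = 0. Then u(z) = ₂F₁(α, β; γ-1; z) + ((q - aαβ + a(1-δ))/((1-a)(γ-1))) ₂F₁(α, β; γ; z) satisfies the general Heun equation u'' + (γ/z + δ/(z-1) + ε/(z-a)) u' + (αβ z - q)/(z(z-1)(z-a)) u = 0 on the punctured unit disk avoiding 0, 1, a. -/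
open Filter FormalMultilinearSeries

namespace HeunAux

/-- Coefficients summable against every geometric weight below 1. -/
def Good (c : ℕ → ℂ) : Prop := ∀ r : ℝ, 0 ≤ r → r < 1 → Summable (fun n => ‖c n‖ * r ^ n)

noncomputable def sumFn (c : ℕ → ℂ) : ℂ → ℂ := fun z => ∑' n : ℕ, c n * z ^ n

noncomputable def dcoeff (c : ℕ → ℂ) : ℕ → ℂ := fun n => ((n : ℂ) + 1) * c (n + 1)

lemma Good.summable {c : ℕ → ℂ} (hc : Good c) {z : ℂ} (hz : ‖z‖ < 1) :
    Summable (fun n => c n * z ^ n) := by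
  have h := hc ‖z‖ (norm_nonneg z) hz
  refine Summable.of_norm ?_
  have he : (fun n => ‖c n * z ^ n‖) = fun n => ‖c n‖ * ‖z‖ ^ n := by
    funext n; rw [norm_mul, norm_pow]
  rw [he]; exact h

lemma Good.shift {c : ℕ → ℂ} (hc : Good c) : Good (dcoeff c) := by
  intro r hr0 hr1
  set r' : ℝ := (r + 1) / 2 with hr'
  have hrr' : r < r' := by simp only [hr']; linarith
  have hr'0 : 0 < r' := by positivity
  have hr'1 : r' < 1 := by simp only [hr']; linarith
  have hS := hc r' (le_of_lt hr'0) hr'1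
  have hMex : ∃ M, ∀ n, ‖c n‖ * r' ^ n ≤ M := by
    obtain ⟨M, hM⟩ := (hS.tendsto_atTop_zero.bddAbove_range)
    exact ⟨M, fun n => hM ⟨n, rfl⟩⟩
  obtain ⟨M, hMb⟩ := hMex
  have hq1 : r / r' < 1 := (div_lt_one hr'0).2 hrr'
  have hq0 : 0 ≤ r / r' := by positivity
  have hsum : Summable (fun n : ℕ => ((n : ℝ) + 1) * (r / r') ^ n) := by
    have h1 : Summable (fun n : ℕ => (n : ℝ) ^ 1 * (r / r') ^ n) :=
      summable_pow_mul_geometric_of_norm_lt_one 1 (by rwa [Real.norm_of_nonneg hq0])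
    have h2 : Summable (fun n : ℕ => (r / r') ^ n) := summable_geometric_of_lt_one hq0 hq1
    have := h1.add h2
    refine this.congr (fun n => ?_)
    simp [pow_one]; ring
  refine Summable.of_nonneg_of_le (fun n => by positivity) ?_ (hsum.mul_left (M / r'))
  intro n
  have hn1 : ‖((n : ℂ) + 1)‖ = (n : ℝ) + 1 := by
    have : ((n : ℂ) + 1) = ((n + 1 : ℕ) : ℂ) := by push_cast; ring
    rw [this, Complex.norm_natCast]; push_cast; ring
  have hrpow : r ^ n = (r / r') ^ n * r' ^ n := by
    rw [div_pow, div_mul_cancel₀]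
    positivity
  have heq : ‖dcoeff c n‖ * r ^ n
      = ((n : ℝ) + 1) * (‖c (n + 1)‖ * r' ^ (n + 1)) * ((r / r') ^ n / r') := by
    show ‖((n : ℂ) + 1) * c (n + 1)‖ * r ^ n = _
    rw [norm_mul, hn1, hrpow, pow_succ]
    field_simp
  rw [heq]
  have h1 : ((n : ℝ) + 1) * (‖c (n + 1)‖ * r' ^ (n + 1)) * ((r / r') ^ n / r')
      ≤ ((n : ℝ) + 1) * M * ((r / r') ^ n / r') := by
    apply mul_le_mul_of_nonneg_right _ (by positivity)
    exact mul_le_mul_of_nonneg_left (hMb (n + 1)) (by positivity)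
  calc ((n : ℝ) + 1) * (‖c (n + 1)‖ * r' ^ (n + 1)) * ((r / r') ^ n / r')
      ≤ ((n : ℝ) + 1) * M * ((r / r') ^ n / r') := h1
    _ = M / r' * (((n : ℝ) + 1) * (r / r') ^ n) := by ring

lemma hs0 {c : ℕ → ℂ} (hc : Good c) {z : ℂ} (hz : ‖z‖ < 1) :
    HasSum (fun n => c n * z ^ n) (sumFn c z) := (hc.summable hz).hasSum

lemma hs1 {c : ℕ → ℂ} (hc : Good c) {z : ℂ} (hz : ‖z‖ < 1) :
    HasSum (fun n : ℕ => (n : ℂ) * c n * z ^ n) (z * sumFn (dcoeff c) z) := by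
  have h2 := (hs0 hc.shift hz).mul_left z
  have h3 : HasSum (fun n : ℕ => ((n : ℕ) + 1 : ℂ) * c (n + 1) * z ^ (n + 1))
      (z * sumFn (dcoeff c) z) := by
    refine h2.congr_fun fun n => ?_
    simp only [dcoeff]; ring
  have h4 : HasSum (fun n : ℕ => ((n + 1 : ℕ) : ℂ) * c (n + 1) * z ^ (n + 1))
      (z * sumFn (dcoeff c) z) := by
    refine h3.congr_fun fun n => ?_; push_cast; ring
  have h5 := (hasSum_nat_add_iff (f := fun n : ℕ => (n : ℂ) * c n * z ^ n) 1).1 h4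
  simpa using h5

lemma hs2 {c : ℕ → ℂ} (hc : Good c) {z : ℂ} (hz : ‖z‖ < 1) :
    HasSum (fun n : ℕ => (n : ℂ) * ((n : ℂ) - 1) * c n * z ^ n)
      (z ^ 2 * sumFn (dcoeff (dcoeff c)) z) := by
  have h2 := (hs0 hc.shift.shift hz).mul_left (z ^ 2)
  have h4 : HasSum (fun n : ℕ => (((n + 2 : ℕ) : ℂ)) * (((n + 2 : ℕ) : ℂ) - 1) *
      c (n + 2) * z ^ (n + 2)) (z ^ 2 * sumFn (dcoeff (dcoeff c)) z) := by
    refine h2.congr_fun fun n => ?_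
    simp only [dcoeff]; push_cast; ring
  have h5 := (hasSum_nat_add_iff
    (f := fun n : ℕ => (n : ℂ) * ((n : ℂ) - 1) * c n * z ^ n) 2).1 h4
  rw [Finset.sum_range_succ, Finset.sum_range_one] at h5
  simpa using h5

lemma sumFn_deriv_hasSum {c : ℕ → ℂ} (hc : Good c) {z : ℂ} (hz : ‖z‖ < 1) :
    HasSum (fun n : ℕ => c n * ((n : ℂ) * z ^ (n - 1))) (sumFn (dcoeff c) z) := by
  have h4 : HasSum (fun n : ℕ => c (n + 1) * (((n + 1 : ℕ) : ℂ) * z ^ (n + 1 - 1)))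
      (sumFn (dcoeff c) z) := by
    refine (hs0 hc.shift hz).congr_fun fun n => ?_
    simp only [dcoeff, Nat.add_sub_cancel]; push_cast; ring
  have h5 := (hasSum_nat_add_iff
    (f := fun n : ℕ => c n * ((n : ℂ) * z ^ (n - 1))) 1).1 h4
  simpa using h5

lemma sumFn_hasDerivAt {c : ℕ → ℂ} (hc : Good c) {z : ℂ} (hz : ‖z‖ < 1) :
    HasDerivAt (sumFn c) (sumFn (dcoeff c) z) z := by
  set r : ℝ := (‖z‖ + 1) / 2 with hr
  have hzr : ‖z‖ < r := by simp only [hr]; linarith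
  have hr0 : 0 < r := lt_of_le_of_lt (norm_nonneg z) hzr
  have hr1 : r < 1 := by simp only [hr]; linarith
  set u : ℕ → ℝ := fun n => (n : ℝ) * ‖c n‖ * r ^ (n - 1) with hu
  have husum : Summable u := by
    have h := hc.shift r (le_of_lt hr0) hr1
    refine (summable_nat_add_iff 1).1 (h.congr fun n => ?_)
    simp only [hu, dcoeff, norm_mul, Nat.add_sub_cancel]
    have hn1 : ‖((n : ℂ) + 1)‖ = (n : ℝ) + 1 := by
      have : ((n : ℂ) + 1) = ((n + 1 : ℕ) : ℂ) := by push_cast; ring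
      rw [this, Complex.norm_natCast]; push_cast; ring
    rw [hn1]; push_cast; ring
  have hder := hasDerivAt_tsum_of_isPreconnected (u := u)
    (g := fun n w => c n * w ^ n) (g' := fun n w => c n * ((n : ℂ) * w ^ (n - 1)))
    (t := Metric.ball (0 : ℂ) r) (y₀ := 0) (y := z) husum Metric.isOpen_ball
    ((convex_ball (0 : ℂ) r).isPreconnected)
    (fun n y _ => (hasDerivAt_pow n y).const_mul (c n))
    (fun n y hy => ?_) (Metric.mem_ball_self hr0) ?_ ?_
  · have ht := (sumFn_deriv_hasSum hc hz).tsum_eq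
    have : sumFn c = fun w => ∑' n : ℕ, c n * w ^ n := rfl
    rw [this]
    rw [← ht]
    exact hder
  · rw [mem_ball_zero_iff] at hy
    rw [norm_mul, norm_mul, norm_pow]
    have h1 : ‖y‖ ^ (n - 1) ≤ r ^ (n - 1) :=
      pow_le_pow_left₀ (norm_nonneg y) (le_of_lt hy) _
    have : ‖(n : ℂ)‖ = (n : ℝ) := Complex.norm_natCast n
    rw [this]
    calc ‖c n‖ * ((n : ℝ) * ‖y‖ ^ (n - 1)) ≤ ‖c n‖ * ((n : ℝ) * r ^ (n - 1)) := by
          apply mul_le_mul_of_nonneg_left _ (norm_nonneg _)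
          exact mul_le_mul_of_nonneg_left h1 (Nat.cast_nonneg n)
      _ = u n := by rw [hu]; ring
  · refine summable_of_ne_finset_zero (s := {0}) fun n hn => ?_
    simp only [Finset.mem_singleton] at hn
    show c n * (0 : ℂ) ^ n = 0
    rw [zero_pow hn, mul_zero]
  · exact mem_ball_zero_iff.2 hzr

lemma sumFn_ode {c : ℕ → ℂ} (hc : Good c) (t α β : ℂ)
    (hrec : ∀ n : ℕ, ((n : ℂ) + 1) * (t + n) * c (n + 1) = (α + n) * (β + n) * c n)
    {z : ℂ} (hz : ‖z‖ < 1) :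
    z * (1 - z) * sumFn (dcoeff (dcoeff c)) z
      + (t - (α + β + 1) * z) * sumFn (dcoeff c) z - α * β * sumFn c z = 0 := by
  have hA := hs1 hc.shift hz
  have hB := hs2 hc hz
  have hC := hs0 hc.shift hz
  have hD := hs1 hc hz
  have hE := hs0 hc hz
  have hcomb := (((hA.sub hB).add (hC.mul_left t)).sub (hD.mul_left (α + β + 1))).sub
    (hE.mul_left (α * β))
  have hzero : (fun n : ℕ => ((n : ℂ) * dcoeff c n * z ^ n - (n : ℂ) * ((n : ℂ) - 1) * c n * z ^ n
      + t * (dcoeff c n * z ^ n) - (α + β + 1) * ((n : ℂ) * c n * z ^ n))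
      - α * β * (c n * z ^ n)) = fun _ => (0 : ℂ) := by
    funext n
    simp only [dcoeff]
    linear_combination z ^ n * hrec n
  rw [hzero] at hcomb
  have h0 := hcomb.unique hasSum_zero
  linear_combination h0

lemma sumFn_contig0 {c1 c2 : ℕ → ℂ} (hc1 : Good c1) (hc2 : Good c2) (G : ℂ)
    (hcc : ∀ n : ℕ, G * c1 n = (G + n) * c2 n) {z : ℂ} (hz : ‖z‖ < 1) :
    G * sumFn c1 z = G * sumFn c2 z + z * sumFn (dcoeff c2) z := by
  have hL := (hs0 hc1 hz).mul_left G
  have hR := ((hs0 hc2 hz).mul_left G).add (hs1 hc2 hz)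
  have : (fun n : ℕ => G * (c2 n * z ^ n) + (n : ℂ) * c2 n * z ^ n)
      = fun n : ℕ => G * (c1 n * z ^ n) := by
    funext n
    linear_combination (-(z ^ n)) * (hcc n)
  rw [this] at hR
  exact hL.unique hR

lemma sumFn_contig1 {c1 c2 : ℕ → ℂ} (hc1 : Good c1) (hc2 : Good c2) (G : ℂ)
    (hcc : ∀ n : ℕ, G * c1 n = (G + n) * c2 n) {z : ℂ} (hz : ‖z‖ < 1) :
    G * sumFn (dcoeff c1) z
      = (G + 1) * sumFn (dcoeff c2) z + z * sumFn (dcoeff (dcoeff c2)) z := by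
  have hL := (hs0 hc1.shift hz).mul_left G
  have hR := ((hs0 hc2.shift hz).mul_left (G + 1)).add (hs1 hc2.shift hz)
  have : (fun n : ℕ => (G + 1) * (dcoeff c2 n * z ^ n) + (n : ℂ) * dcoeff c2 n * z ^ n)
      = fun n : ℕ => G * (dcoeff c1 n * z ^ n) := by
    funext n
    simp only [dcoeff]
    have h := hcc (n + 1)
    push_cast at h ⊢
    linear_combination (-(((n : ℂ) + 1) * z ^ n)) * h
  rw [this] at hR
  exact hL.unique hR

lemma final_algebra (a α β γ q k z F1 D1 DD1 F2 D2 DD2 : ℂ)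
    (hk : k * ((1 - a) * (γ - 1)) = q - a * α * β + a * (1 - (2 + α + β - γ)))
    (hq : (q - a * α * β + a * (1 - (2 + α + β - γ))) *
        (q - a * α * β + (a - 1) * (1 - γ))
        - a * (1 - a) * (1 + α - γ) * (1 + β - γ) = 0)
    (h1 : z * (1 - z) * DD1 + ((γ - 1) - (α + β + 1) * z) * D1 - α * β * F1 = 0)
    (h2 : z * (1 - z) * DD2 + (γ - (α + β + 1) * z) * D2 - α * β * F2 = 0)
    (h3 : (γ - 1) * F1 = (γ - 1) * F2 + z * D2)
    (h4 : (γ - 1) * D1 = ((γ - 1) + 1) * D2 + z * DD2)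
    (hz0 : z ≠ 0) (hz1 : z - 1 ≠ 0) (hza : z - a ≠ 0)
    (ha1 : (1 : ℂ) - a ≠ 0) (hG : γ - 1 ≠ 0) :
    DD1 + k * DD2 + (γ / z + (2 + α + β - γ) / (z - 1) + (-1) / (z - a)) * (D1 + k * D2)
      + (α * β * z - q) / (z * (z - 1) * (z - a)) * (F1 + k * F2) = 0 := by
  have key : ((1 - a) * (γ - 1)) *
      (z * (z - 1) * (z - a) * (DD1 + k * DD2)
        + (γ * (z - 1) * (z - a) + (2 + α + β - γ) * z * (z - a) - z * (z - 1)) * (D1 + k * D2)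
        + (α * β * z - q) * (F1 + k * F2)) = 0 := by
    linear_combination ((1 - a) * (γ - 1) * (-(z - a))) * h1
      + (-(1 - a) * (γ - 1) * k * (z - a) + a * (1 - a)) * h2
      + ((1 - a) * (a * α * β - q)) * h3
      + (-a * (z - 1) * (1 - a)) * h4
      + (z * (1 - a) * D2 + (a * α * β - q) * F2) * hk
      - F2 * hq
  have hT : z * (z - 1) * (z - a) * (DD1 + k * DD2)
      + (γ * (z - 1) * (z - a) + (2 + α + β - γ) * z * (z - a) - z * (z - 1)) * (D1 + k * D2)
      + (α * β * z - q) * (F1 + k * F2) = 0 := by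
    rcases mul_eq_zero.1 key with h | h
    · exact absurd h (mul_ne_zero ha1 hG)
    · exact h
  field_simp
  linear_combination hT

noncomputable def hgc (α β t : ℂ) (n : ℕ) : ℂ :=
  ((n.factorial : ℂ))⁻¹ * (ascPochhammer ℂ n).eval α * (ascPochhammer ℂ n).eval β *
    ((ascPochhammer ℂ n).eval t)⁻¹

lemma hgc_eq (α β t : ℂ) : hgc α β t = ordinaryHypergeometricCoefficient α β t := rfl

lemma poch_ne_zero {t : ℂ} (ht : ∀ m : ℕ, t ≠ -(m : ℂ)) (n : ℕ) :
    (ascPochhammer ℂ n).eval t ≠ 0 := by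
  rw [Ne, ascPochhammer_eval_eq_zero_iff]
  rintro ⟨k, -, hk⟩
  exact ht k (by linear_combination hk)

lemma hgc_rec (α β t : ℂ) (ht : ∀ m : ℕ, t ≠ -(m : ℂ)) (n : ℕ) :
    ((n : ℂ) + 1) * (t + n) * hgc α β t (n + 1) = (α + n) * (β + n) * hgc α β t n := by
  have hpt := poch_ne_zero ht n
  have htn : t + (n : ℂ) ≠ 0 := fun h => ht n (by linear_combination h)
  have hfact : ((n.factorial : ℂ)) ≠ 0 := Nat.cast_ne_zero.2 n.factorial_ne_zero
  have hn1 : ((n : ℂ) + 1) ≠ 0 := by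
    have : ((n : ℂ) + 1) = ((n + 1 : ℕ) : ℂ) := by push_cast; ring
    rw [this]; exact Nat.cast_ne_zero.2 (Nat.succ_ne_zero n)
  simp only [hgc, ascPochhammer_succ_eval, Nat.factorial_succ]
  push_cast
  field_simp

lemma hgc_contig (α β γ : ℂ) (hγ : ∀ m : ℕ, γ - 1 ≠ -(m : ℂ)) (n : ℕ) :
    (γ - 1) * hgc α β (γ - 1) n = ((γ - 1) + n) * hgc α β γ n := by
  have hγ0 : ∀ m : ℕ, γ ≠ -(m : ℂ) := by
    intro m h
    exact hγ (m + 1) (by push_cast; linear_combination h)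
  have hkey : ∀ n : ℕ, (ascPochhammer ℂ n).eval (γ - 1) * (γ - 1 + n)
      = (γ - 1) * (ascPochhammer ℂ n).eval γ := by
    intro n
    induction n with
    | zero => simp
    | succ m ih =>
      rw [ascPochhammer_succ_eval, ascPochhammer_succ_eval]
      push_cast
      linear_combination (γ + m) * ih
  have hp1 := poch_ne_zero hγ n
  have hp2 := poch_ne_zero hγ0 n
  have hG : γ - 1 ≠ 0 := by
    have := hγ 0; simpa using this
  have hfact : ((n.factorial : ℂ)) ≠ 0 := Nat.cast_ne_zero.2 n.factorial_ne_zero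
  simp only [hgc]
  field_simp
  linear_combination (-(ascPochhammer ℂ n).eval α *
    (ascPochhammer ℂ n).eval β) * hkey n

lemma good_hgc (α β t : ℂ) (ht : ∀ m : ℕ, t ≠ -(m : ℂ)) : Good (hgc α β t) := by
  have hrad : 1 ≤ (ordinaryHypergeometricSeries ℂ α β t).radius := by
    by_cases hα : ∃ k : ℕ, (k : ℂ) = -α
    · obtain ⟨k, hk⟩ := hα
      have : α = -(k : ℂ) := by linear_combination hk
      rw [this, ordinaryHypergeometric_radius_top_of_neg_nat₁]
      exact le_top
    · by_cases hβ : ∃ k : ℕ, (k : ℂ) = -β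
      · obtain ⟨k, hk⟩ := hβ
        have : β = -(k : ℂ) := by linear_combination hk
        rw [this, ordinaryHypergeometric_radius_top_of_neg_nat₂]
        exact le_top
      · push_neg at hα hβ
        rw [ordinaryHypergeometricSeries_radius_eq_one ℂ]
        intro kn
        refine ⟨hα kn, hβ kn, fun h => ht kn (by linear_combination h)⟩
  intro r hr0 hr1
  have hlt : (r.toNNReal : ENNReal) < (ordinaryHypergeometricSeries ℂ α β t).radius := by
    refine lt_of_lt_of_le ?_ hrad
    rw [← ENNReal.coe_one, ENNReal.coe_lt_coe]
    exact Real.toNNReal_lt_one.2 hr1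
  have hs := (ordinaryHypergeometricSeries ℂ α β t).summable_norm_mul_pow hlt
  refine hs.congr fun n => ?_
  rw [Real.coe_toNNReal _ hr0]
  congr 1
  have : ordinaryHypergeometricSeries ℂ α β t n
      = ofScalars ℂ (ordinaryHypergeometricCoefficient α β t) n := rfl
  rw [this, ofScalars_norm, ← hgc_eq]

end HeunAux

lemma gaussHyp_eq_sumFn (a b c z : ℂ) : gaussHyp a b c z = HeunAux.sumFn (HeunAux.hgc a b c) z := by
  refine tsum_congr fun n => ?_
  show _ = HeunAux.hgc a b c n * z ^ n
  simp only [HeunAux.hgc]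
  rw [div_eq_mul_inv, mul_inv]
  ring

/-- for `ε = -1` and `q` a root of the displayed quadratic equation,
the two-term combination of hypergeometric functions solves the general Heun
equation on the unit disk punctured at `0`, `1`, `a`. -/
theorem heun_two_hypergeometric_solution
    (a α β γ δ ε q : ℂ) (hF : 1 + α + β = γ + δ + ε) (hε : ε = -1)
    (hγ : ∀ m : ℕ, γ - 1 ≠ -(m : ℂ)) (ha0 : a ≠ 0) (ha1 : a ≠ 1)
    (hq : (q - a * α * β + a * (1 - δ)) * (q - a * α * β + (a - 1) * (1 - γ))
            - a * (1 - a) * (1 + α - γ) * (1 + β - γ) = 0)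
    (u : ℂ → ℂ)
    (hu : ∀ z, u z = gaussHyp α β (γ - 1) z
        + ((q - a * α * β + a * (1 - δ)) / ((1 - a) * (γ - 1))) * gaussHyp α β γ z) :
    ∀ z : ℂ, ‖z‖ < 1 → z ≠ 0 → z ≠ 1 → z ≠ a →
      deriv (deriv u) z
        + (γ / z + δ / (z - 1) + ε / (z - a)) * deriv u z
        + (α * β * z - q) / (z * (z - 1) * (z - a)) * u z = 0 := by
  subst hε
  have hδ : δ = 2 + α + β - γ := by linear_combination -hF
  subst hδ
  have hγ1 : γ - 1 ≠ 0 := by have := hγ 0; simpa using this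
  have hγ0 : ∀ m : ℕ, γ ≠ -(m : ℂ) := by
    intro m h
    exact hγ (m + 1) (by push_cast; linear_combination h)
  have ha1' : (1 : ℂ) - a ≠ 0 := fun h => ha1 (by linear_combination -h)
  set c1 : ℕ → ℂ := HeunAux.hgc α β (γ - 1) with hc1
  set c2 : ℕ → ℂ := HeunAux.hgc α β γ with hc2
  have good1 : HeunAux.Good c1 := HeunAux.good_hgc α β (γ - 1) hγ
  have good2 : HeunAux.Good c2 := HeunAux.good_hgc α β γ hγ0
  set k : ℂ := (q - a * α * β + a * (1 - (2 + α + β - γ))) / ((1 - a) * (γ - 1)) with hkdef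
  have hk : k * ((1 - a) * (γ - 1)) = q - a * α * β + a * (1 - (2 + α + β - γ)) := by
    rw [hkdef]
    exact div_mul_cancel₀ _ (mul_ne_zero ha1' hγ1)
  have hu' : u = fun w => HeunAux.sumFn c1 w + k * HeunAux.sumFn c2 w := by
    funext w
    rw [hu w, gaussHyp_eq_sumFn, gaussHyp_eq_sumFn]
  subst hu'
  intro z hz hz0 hz1 hza
  have hd : ∀ w : ℂ, ‖w‖ < 1 →
      HasDerivAt (fun w => HeunAux.sumFn c1 w + k * HeunAux.sumFn c2 w)
        (HeunAux.sumFn (HeunAux.dcoeff c1) w + k * HeunAux.sumFn (HeunAux.dcoeff c2) w) w :=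
    fun w hw => ((HeunAux.sumFn_hasDerivAt good1 hw).add
      ((HeunAux.sumFn_hasDerivAt good2 hw).const_mul k))
  have hball : Metric.ball (0 : ℂ) 1 ∈ nhds z :=
    Metric.isOpen_ball.mem_nhds (mem_ball_zero_iff.2 hz)
  have hev : deriv (fun w => HeunAux.sumFn c1 w + k * HeunAux.sumFn c2 w)
      =ᶠ[nhds z] fun w => HeunAux.sumFn (HeunAux.dcoeff c1) w
        + k * HeunAux.sumFn (HeunAux.dcoeff c2) w :=
    Filter.eventuallyEq_of_mem hball fun w hw => (hd w (mem_ball_zero_iff.1 hw)).deriv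
  have e1 : deriv (fun w => HeunAux.sumFn c1 w + k * HeunAux.sumFn c2 w) z
      = HeunAux.sumFn (HeunAux.dcoeff c1) z + k * HeunAux.sumFn (HeunAux.dcoeff c2) z :=
    (hd z hz).deriv
  have e2 : deriv (deriv (fun w => HeunAux.sumFn c1 w + k * HeunAux.sumFn c2 w)) z
      = HeunAux.sumFn (HeunAux.dcoeff (HeunAux.dcoeff c1)) z
        + k * HeunAux.sumFn (HeunAux.dcoeff (HeunAux.dcoeff c2)) z := by
    rw [hev.deriv_eq]
    exact ((HeunAux.sumFn_hasDerivAt good1.shift hz).add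
      ((HeunAux.sumFn_hasDerivAt good2.shift hz).const_mul k)).deriv
  have h1 := HeunAux.sumFn_ode good1 (γ - 1) α β (HeunAux.hgc_rec α β (γ - 1) hγ) hz
  have h2 := HeunAux.sumFn_ode good2 γ α β (HeunAux.hgc_rec α β γ hγ0) hz
  have h3 := HeunAux.sumFn_contig0 good1 good2 (γ - 1) (HeunAux.hgc_contig α β γ hγ) hz
  have h4 := HeunAux.sumFn_contig1 good1 good2 (γ - 1) (HeunAux.hgc_contig α β γ hγ) hz
  rw [e2, e1]
  have hbeta : (fun w => HeunAux.sumFn c1 w + k * HeunAux.sumFn c2 w) z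
      = HeunAux.sumFn c1 z + k * HeunAux.sumFn c2 z := rfl
  rw [hbeta]
  exact HeunAux.final_algebra a α β γ q k z _ _ _ _ _ _ hk hq h1 h2 h3 h4 hz0
    (sub_ne_zero.2 hz1) (sub_ne_zero.2 hza) ha1' hγ1
end
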